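/- Let ρ_in be a positive semidefinite n×n complex matrix with Tr ρ_in = 1. For k = 0,…,N−1, let U_k and Ũ_k be unitary n×n complex matrices and let π_k be n×n complex matrices with π_kᴴ*π_k ≤ I (i.e., I − π_kᴴ*π_k is positive semidefinite). Define recursively ρ_0 := ρ_in, ρ_{k+1} := π_k*U_k*ρ_k*U_kᴴ*π_kᴴ, and ρ̃_0 := ρ_in, ρ̃_{k+1} := π_k*Ũ_k*ρ̃_k*Ũ_kᴴ*π_kᴴ. Then ‖ρ̃_N − ρ_N‖₁ ≤ 2·∑_{k=0}^{N−1} ‖Ũ_k − U_k‖. -/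

import Mathlib

open scoped Matrix.Norms.L2Operator ComplexOrder
open Matrix

/-- The trace norm of a complex square matrix: the trace of the positive semidefinite
square root of `Aᴴ * A` (a nonnegative real number). -/
noncomputable def traceNorm {n : Type*} [Fintype n] [DecidableEq n]
    (A : Matrix n n ℂ) : ℝ :=
  (((Matrix.posSemidef_conjTranspose_mul_self A).1.eigenvectorUnitary : Matrix n n ℂ) *
      diagonal (((↑) : ℝ → ℂ) ∘ (Real.sqrt ∘ (Matrix.posSemidef_conjTranspose_mul_self A).1.eigenvalues)) *
      (star ((Matrix.posSemidef_conjTranspose_mul_self A).1.eigenvectorUnitary : Matrix n n ℂ))).trace.re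

open scoped MatrixOrder in
lemma traceNorm_eq_of_sq {n : Type*} [Fintype n] [DecidableEq n] (A B : Matrix n n ℂ)
    (hB : B.PosSemidef) (h : B ^ 2 = Aᴴ * A) : traceNorm A = B.trace.re := by
  have hAA := Matrix.posSemidef_conjTranspose_mul_self A
  have h0 : (0 : Matrix n n ℂ) ≤ Aᴴ * A := hAA.nonneg
  have h1 : (0 : Matrix n n ℂ) ≤ B := hB.nonneg
  have hs : CFC.sqrt (Aᴴ * A) = B := CFC.sqrt_unique (by rw [← pow_two, h])
  rw [CFC.sqrt_eq_real_sqrt _ h0, cfcₙ_eq_cfc, hAA.1.cfc_eq] at hs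
  rw [traceNorm, ← hs]
  rfl

namespace TraceNormAux

variable {n : Type*} [Fintype n] [DecidableEq n]

lemma norm_one_matrix [Nonempty n] : ‖(1 : Matrix n n ℂ)‖ = 1 := by
  rw [Matrix.cstar_norm_def, _root_.map_one]
  exact ContinuousLinearMap.norm_id

lemma norm_unitary [Nonempty n] {V : Matrix n n ℂ} (hV : V ∈ Matrix.unitaryGroup n ℂ) :
    ‖V‖ = 1 := by
  have h1 : Vᴴ * V = 1 := by
    simpa [Matrix.star_eq_conjTranspose] using (Matrix.mem_unitaryGroup_iff'.mp hV)
  have h := Matrix.l2_opNorm_conjTranspose_mul_self V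
  rw [h1, norm_one_matrix] at h
  nlinarith [norm_nonneg V]

/-- Any entry of a matrix is bounded by the `ℓ²→ℓ²` operator norm. -/
lemma entry_le_opNorm (B : Matrix n n ℂ) (i j : n) : ‖B i j‖ ≤ ‖B‖ := by
  have h := Matrix.l2_opNorm_mulVec B (EuclideanSpace.single j (1 : ℂ))
  rw [EuclideanSpace.norm_single, norm_one, mul_one] at h
  refine le_trans ?_ h
  have hy : (B *ᵥ (EuclideanSpace.single j (1 : ℂ) : n → ℂ)) = fun i => B i j := by
    funext k
    have : ((EuclideanSpace.single j (1 : ℂ)) : n → ℂ) = Pi.single j 1 := by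
      funext l
      simp [EuclideanSpace.single_apply, Pi.single_apply]
    rw [this]
    simp [Matrix.mulVec_single]
  have hnorm : ‖((EuclideanSpace.equiv n ℂ).symm <| B *ᵥ (EuclideanSpace.single j (1:ℂ) : n → ℂ))‖
      = Real.sqrt (∑ k, ‖B k j‖ ^ 2) := by
    rw [EuclideanSpace.norm_eq]
    congr 1
    refine Finset.sum_congr rfl fun k _ => ?_
    congr 1
    show ‖(B *ᵥ ((EuclideanSpace.single j (1:ℂ)) : n → ℂ)) k‖ = _
    rw [hy]
  rw [hnorm]
  have : ‖B i j‖ = Real.sqrt (‖B i j‖ ^ 2) := by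
    rw [Real.sqrt_sq (norm_nonneg _)]
  rw [this]
  apply Real.sqrt_le_sqrt
  exact Finset.single_le_sum (f := fun k => ‖B k j‖ ^ 2) (fun k _ => by positivity)
    (Finset.mem_univ i)

/-- A matrix `P` with `PᴴP ≤ 1` is an `ℓ²` contraction. -/
lemma norm_le_one_of_contraction {P : Matrix n n ℂ}
    (hP : ((1 : Matrix n n ℂ) - Pᴴ * P).PosSemidef) : ‖P‖ ≤ 1 := by
  rw [Matrix.l2_opNorm_def]
  refine ContinuousLinearMap.opNorm_le_bound _ zero_le_one fun x => ?_
  rw [one_mul]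
  set v : n → ℂ := (WithLp.equiv 2 (n → ℂ)) x with hv
  show ‖((WithLp.equiv 2 (n → ℂ)).symm (P *ᵥ v) : EuclideanSpace ℂ n)‖ ≤ ‖x‖
  set y : EuclideanSpace ℂ n := (WithLp.equiv 2 (n → ℂ)).symm (P *ᵥ v) with hy
  -- squared norms as re of dot products
  have hsq : ∀ w : n → ℂ,
      ‖((WithLp.equiv 2 (n → ℂ)).symm w : EuclideanSpace ℂ n)‖ ^ 2
        = (dotProduct (star w) w).re := by
    intro w
    have := @inner_self_eq_norm_sq ℂ _ _ _ _ ((WithLp.equiv 2 (n → ℂ)).symm w)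
    rw [← this]
    rw [PiLp.inner_apply]
    simp [dotProduct, Complex.re_sum, RCLike.inner_apply, mul_comm]
    refine Finset.sum_congr rfl fun k _ => ?_
    rw [← Complex.ofReal_pow, Complex.ofReal_re, ← Complex.normSq_eq_norm_sq, Complex.normSq_apply]
  have hxsq : ‖x‖ ^ 2 = (dotProduct (star v) v).re := by
    have : x = (WithLp.equiv 2 (n → ℂ)).symm v := by simp [hv]
    rw [this, hsq]
  have hysq : ‖y‖ ^ 2 = (dotProduct (star (P *ᵥ v)) (P *ᵥ v)).re := hsq _
  have hdot : dotProduct (star (P *ᵥ v)) (P *ᵥ v)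
      = dotProduct (star v) ((Pᴴ * P) *ᵥ v) := by
    rw [Matrix.star_mulVec, Matrix.dotProduct_mulVec, Matrix.vecMul_vecMul,
      Matrix.dotProduct_mulVec]
  have hpos := hP.re_dotProduct_nonneg v
  simp only [RCLike.re_to_complex] at hpos
  have hexp : dotProduct (star v) (((1 : Matrix n n ℂ) - Pᴴ * P) *ᵥ v)
      = dotProduct (star v) v - dotProduct (star v) ((Pᴴ * P) *ᵥ v) := by
    rw [Matrix.sub_mulVec, dotProduct_sub, Matrix.one_mulVec]
  rw [hexp] at hpos
  have hle : ‖y‖ ^ 2 ≤ ‖x‖ ^ 2 := by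
    rw [hxsq, hysq, hdot]
    have := Complex.sub_re (dotProduct (star v) v)
      (dotProduct (star v) ((Pᴴ * P) *ᵥ v))
    rw [this] at hpos
    linarith
  nlinarith [norm_nonneg y, norm_nonneg x]

section Hermitian

variable {A : Matrix n n ℂ} (hA : A.IsHermitian)

/-- For a Hermitian matrix the trace norm equals the sum of absolute values of eigenvalues. -/
lemma traceNorm_eq_sum_abs (hA : A.IsHermitian) :
    traceNorm A = ∑ i, |hA.eigenvalues i| := by
  set V : Matrix n n ℂ := (hA.eigenvectorUnitary : Matrix n n ℂ) with hVdef
  have hV1 : star V * V = 1 := Matrix.mem_unitaryGroup_iff'.mp hA.eigenvectorUnitary.2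
  set D0 : Matrix n n ℂ := Matrix.diagonal (RCLike.ofReal ∘ hA.eigenvalues) with hD0
  set D : Matrix n n ℂ := Matrix.diagonal (fun i => ((|hA.eigenvalues i| : ℝ) : ℂ)) with hD
  have hspec : A = V * D0 * star V := hA.spectral_theorem
  have hDpsd : D.PosSemidef := by
    refine Matrix.PosSemidef.diagonal ?_
    intro i
    show (0 : ℂ) ≤ ((|hA.eigenvalues i| : ℝ) : ℂ)
    rw [Complex.zero_le_real]
    exact abs_nonneg _
  have hBpsd : (V * D * star V).PosSemidef := by
    have := hDpsd.mul_mul_conjTranspose_same V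
    simpa [Matrix.star_eq_conjTranspose, Matrix.mul_assoc] using this
  have hDD : D * D = D0 * D0 := by
    rw [hD, hD0, Matrix.diagonal_mul_diagonal, Matrix.diagonal_mul_diagonal]
    refine congrArg Matrix.diagonal ?_
    funext i
    show ((|hA.eigenvalues i| : ℝ) : ℂ) * ((|hA.eigenvalues i| : ℝ) : ℂ)
        = ((hA.eigenvalues i : ℝ) : ℂ) * ((hA.eigenvalues i : ℝ) : ℂ)
    rw [← Complex.ofReal_mul, ← Complex.ofReal_mul, abs_mul_abs_self]
  have hsq : (V * D * star V) ^ 2 = Aᴴ * A := by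
    rw [hA.eq]
    conv_rhs => rw [hspec]
    rw [pow_two]
    calc (V * D * star V) * (V * D * star V)
        = V * (D * (star V * V) * D) * star V := by
          simp only [Matrix.mul_assoc]
      _ = V * (D * D) * star V := by rw [hV1]; simp only [Matrix.mul_one, Matrix.mul_assoc]
      _ = V * (D0 * D0) * star V := by rw [hDD]
      _ = (V * D0 * star V) * (V * D0 * star V) := by
          rw [show V * D0 * star V * (V * D0 * star V)
              = V * (D0 * (star V * V) * D0) * star V by simp only [Matrix.mul_assoc]]
          rw [hV1]
          simp only [Matrix.mul_one, Matrix.mul_assoc]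
  rw [traceNorm_eq_of_sq A _ hBpsd hsq]
  rw [Matrix.trace_mul_cycle, hV1, Matrix.one_mul, Matrix.trace_diagonal]
  rw [Complex.re_sum]
  simp

lemma traceNorm_nonneg_of_hermitian (hA : A.IsHermitian) : 0 ≤ traceNorm A := by
  rw [traceNorm_eq_sum_abs hA]
  positivity

/-- Pairing bound: `Re Tr (M A) ≤ ‖M‖ ‖A‖₁` for Hermitian `A`. -/
lemma re_trace_mul_le [Nonempty n] (hA : A.IsHermitian) (M : Matrix n n ℂ) :
    ((M * A).trace).re ≤ ‖M‖ * traceNorm A := by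
  set V : Matrix n n ℂ := (hA.eigenvectorUnitary : Matrix n n ℂ) with hVdef
  have hVu : V ∈ Matrix.unitaryGroup n ℂ := hA.eigenvectorUnitary.2
  have hVn : ‖V‖ = 1 := norm_unitary hVu
  have hVHn : ‖Vᴴ‖ = 1 := by rw [Matrix.l2_opNorm_conjTranspose]; exact hVn
  set D0 : Matrix n n ℂ := Matrix.diagonal (RCLike.ofReal ∘ hA.eigenvalues) with hD0
  have hspec : A = V * D0 * star V := hA.spectral_theorem
  set B : Matrix n n ℂ := star V * M * V with hB
  have htr : (M * A).trace = (B * D0).trace := by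
    conv_lhs => rw [hspec]
    rw [show M * (V * D0 * star V) = (M * V) * D0 * star V by simp only [Matrix.mul_assoc]]
    rw [Matrix.trace_mul_cycle]
    rw [hB]
    simp only [Matrix.mul_assoc]
  have hdiag : (B * D0).trace = ∑ i, B i i * ((hA.eigenvalues i : ℝ) : ℂ) := by
    rw [Matrix.trace]
    refine Finset.sum_congr rfl fun i _ => ?_
    simp [Matrix.diag, Matrix.mul_diagonal, hD0]
  have hBn : ‖B‖ ≤ ‖M‖ := by
    calc ‖B‖ ≤ ‖star V * M‖ * ‖V‖ := Matrix.l2_opNorm_mul _ _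
      _ ≤ ‖star V‖ * ‖M‖ * ‖V‖ := by
          have := Matrix.l2_opNorm_mul (star V) M
          nlinarith [norm_nonneg V, norm_nonneg (star V * M)]
      _ = ‖M‖ := by
          rw [Matrix.star_eq_conjTranspose, hVHn, hVn]; ring
  rw [htr, hdiag, Complex.re_sum, traceNorm_eq_sum_abs hA, Finset.mul_sum]
  refine Finset.sum_le_sum fun i _ => ?_
  have h1 : (B i i * ((hA.eigenvalues i : ℝ) : ℂ)).re ≤ ‖B i i * ((hA.eigenvalues i : ℝ) : ℂ)‖ :=
    Complex.re_le_norm _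
  refine h1.trans ?_
  rw [norm_mul]
  have h2 : ‖(((hA.eigenvalues i : ℝ)) : ℂ)‖ = |hA.eigenvalues i| := by
    rw [Complex.norm_real, Real.norm_eq_abs]
  rw [h2]
  have h3 : ‖B i i‖ ≤ ‖M‖ := (entry_le_opNorm B i i).trans hBn
  have := abs_nonneg (hA.eigenvalues i)
  nlinarith [norm_nonneg (B i i)]

/-- Optimizer: there is a contraction `W` with `Re Tr (W A) = ‖A‖₁`, for Hermitian `A`. -/
lemma exists_optimizer [Nonempty n] (hA : A.IsHermitian) :
    ∃ W : Matrix n n ℂ, ‖W‖ ≤ 1 ∧ ((W * A).trace).re = traceNorm A := by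
  set V : Matrix n n ℂ := (hA.eigenvectorUnitary : Matrix n n ℂ) with hVdef
  have hV1 : star V * V = 1 := Matrix.mem_unitaryGroup_iff'.mp hA.eigenvectorUnitary.2
  have hV2 : V * star V = 1 := Matrix.mem_unitaryGroup_iff.mp hA.eigenvectorUnitary.2
  set s : n → ℂ := fun i => if hA.eigenvalues i < 0 then (-1 : ℂ) else 1 with hs
  set W : Matrix n n ℂ := V * Matrix.diagonal s * star V with hW
  have hss : ∀ i, star (s i) * s i = 1 := by
    intro i
    rw [hs]
    by_cases h : hA.eigenvalues i < 0 <;> simp [h]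
  have hWu : W ∈ Matrix.unitaryGroup n ℂ := by
    rw [Matrix.mem_unitaryGroup_iff']
    rw [hW]
    rw [show star (V * Matrix.diagonal s * star V) = V * star (Matrix.diagonal s) * star V by
      simp [Matrix.star_mul, star_star, Matrix.mul_assoc]]
    rw [Matrix.star_eq_conjTranspose (Matrix.diagonal s), Matrix.diagonal_conjTranspose]
    calc V * Matrix.diagonal (star s) * star V * (V * Matrix.diagonal s * star V)
        = V * (Matrix.diagonal (star s) * (star V * V) * Matrix.diagonal s) * star V := by
          simp only [Matrix.mul_assoc]
      _ = V * (Matrix.diagonal (star s) * Matrix.diagonal s) * star V := by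
          rw [hV1]; simp only [Matrix.mul_one, Matrix.mul_assoc]
      _ = V * (1 : Matrix n n ℂ) * star V := by
          rw [Matrix.diagonal_mul_diagonal]
          have h1 : Matrix.diagonal (fun i => star s i * s i) = (1 : Matrix n n ℂ) := by
            have h2 : (fun i => star s i * s i) = fun _ : n => (1 : ℂ) := funext hss
            rw [h2]
            exact Matrix.diagonal_one
          rw [h1]
      _ = 1 := by rw [Matrix.mul_one, hV2]
  refine ⟨W, le_of_eq (norm_unitary hWu), ?_⟩
  set D0 : Matrix n n ℂ := Matrix.diagonal (RCLike.ofReal ∘ hA.eigenvalues) with hD0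
  have hspec : A = V * D0 * star V := hA.spectral_theorem
  have hWA : W * A = V * (Matrix.diagonal (fun i => s i * ((hA.eigenvalues i : ℝ) : ℂ))) * star V := by
    conv_lhs => rw [hW, hspec]
    calc V * Matrix.diagonal s * star V * (V * D0 * star V)
        = V * (Matrix.diagonal s * (star V * V) * D0) * star V := by
          simp only [Matrix.mul_assoc]
      _ = V * (Matrix.diagonal s * D0) * star V := by
          rw [hV1]; simp only [Matrix.mul_one, Matrix.mul_assoc]
      _ = _ := by
          rw [hD0, Matrix.diagonal_mul_diagonal]
          rfl
  rw [hWA, Matrix.trace_mul_cycle, hV1, Matrix.one_mul, Matrix.trace_diagonal,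
    traceNorm_eq_sum_abs hA, Complex.re_sum]
  refine Finset.sum_congr rfl fun i _ => ?_
  rw [hs]
  by_cases h : hA.eigenvalues i < 0
  · simp only [h, if_true]
    rw [abs_of_neg h]
    simp
  · simp only [h, if_false]
    rw [abs_of_nonneg (not_lt.mp h)]
    simp

end Hermitian

lemma isHermitian_sub {A B : Matrix n n ℂ} (hA : A.IsHermitian) (hB : B.IsHermitian) :
    (A - B).IsHermitian := hA.sub hB

/-- Triangle inequality for the trace norm of Hermitian matrices. -/
lemma traceNorm_add_le [Nonempty n] {A B : Matrix n n ℂ}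
    (hA : A.IsHermitian) (hB : B.IsHermitian) :
    traceNorm (A + B) ≤ traceNorm A + traceNorm B := by
  obtain ⟨W, hW1, hW2⟩ := exists_optimizer (hA.add hB)
  rw [← hW2, Matrix.mul_add, Matrix.trace_add, Complex.add_re]
  have h1 := re_trace_mul_le hA W
  have h2 := re_trace_mul_le hB W
  have hA0 := traceNorm_nonneg_of_hermitian hA
  have hB0 := traceNorm_nonneg_of_hermitian hB
  nlinarith

/-- Conjugation bound: `‖M A Mᴴ‖₁ ≤ ‖M‖² ‖A‖₁` for Hermitian `A`. -/
lemma traceNorm_conj_le [Nonempty n] {A : Matrix n n ℂ} (hA : A.IsHermitian)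
    (M : Matrix n n ℂ) :
    traceNorm (M * A * Mᴴ) ≤ ‖M‖ * ‖M‖ * traceNorm A := by
  have hH : (M * A * Mᴴ).IsHermitian := Matrix.isHermitian_mul_mul_conjTranspose M hA
  obtain ⟨W, hW1, hW2⟩ := exists_optimizer hH
  rw [← hW2]
  have hcyc : (W * (M * A * Mᴴ)).trace = ((Mᴴ * W * M) * A).trace := by
    rw [show W * (M * A * Mᴴ) = (W * M) * A * Mᴴ by simp only [Matrix.mul_assoc]]
    rw [Matrix.trace_mul_cycle]
    simp only [Matrix.mul_assoc]
  rw [hcyc]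
  have h1 := re_trace_mul_le hA (Mᴴ * W * M)
  have hn : ‖Mᴴ * W * M‖ ≤ ‖M‖ * ‖M‖ := by
    calc ‖Mᴴ * W * M‖ ≤ ‖Mᴴ * W‖ * ‖M‖ := Matrix.l2_opNorm_mul _ _
      _ ≤ ‖Mᴴ‖ * ‖W‖ * ‖M‖ := by
          have := Matrix.l2_opNorm_mul Mᴴ W
          nlinarith [norm_nonneg M, norm_nonneg (Mᴴ * W)]
      _ ≤ ‖M‖ * ‖M‖ := by
          rw [Matrix.l2_opNorm_conjTranspose]
          nlinarith [norm_nonneg M, norm_nonneg W]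
  have hA0 := traceNorm_nonneg_of_hermitian hA
  nlinarith [norm_nonneg (Mᴴ * W * M)]

/-- For a PSD matrix the trace norm is the (real part of the) trace. -/
lemma traceNorm_psd {ρ : Matrix n n ℂ} (hρ : ρ.PosSemidef) :
    traceNorm ρ = (ρ.trace).re := by
  have hsq : ρ ^ 2 = ρᴴ * ρ := by rw [pow_two, hρ.isHermitian.eq]
  exact traceNorm_eq_of_sq ρ ρ hρ hsq

end TraceNormAux

set_option maxHeartbeats 1000000 in
open TraceNormAux in
/-- Trajectory-level trace-norm bound (Eq. SM trajectory_trace_bound_note_final):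
comparing exact and implemented propagators interleaved with trace-non-increasing
single-Kraus operations, `‖ρ̃_N − ρ_N‖₁ ≤ 2 ∑_k ‖Ũ_k − U_k‖`. -/
theorem trajectory_trace_norm_bound {n : Type*} [Fintype n] [DecidableEq n] [Nonempty n]
    (N : ℕ) (ρin : Matrix n n ℂ) (hin : ρin.PosSemidef) (htr : ρin.trace = 1)
    (U Ut P : ℕ → Matrix n n ℂ)
    (hU : ∀ k < N, U k ∈ Matrix.unitaryGroup n ℂ)
    (hUt : ∀ k < N, Ut k ∈ Matrix.unitaryGroup n ℂ)
    (hP : ∀ k < N, ((1 : Matrix n n ℂ) - (P k)ᴴ * P k).PosSemidef)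
    (ρ ρt : ℕ → Matrix n n ℂ)
    (hρ0 : ρ 0 = ρin) (hρt0 : ρt 0 = ρin)
    (hρ : ∀ k < N, ρ (k + 1) = P k * U k * ρ k * (U k)ᴴ * (P k)ᴴ)
    (hρt : ∀ k < N, ρt (k + 1) = P k * Ut k * ρt k * (Ut k)ᴴ * (P k)ᴴ) :
    traceNorm (ρt N - ρ N) ≤ 2 * ∑ k ∈ Finset.range N, ‖Ut k - U k‖ := by
  -- strengthened induction
  suffices key : ∀ m, m ≤ N → (ρ m).PosSemidef ∧ (ρt m).PosSemidef ∧
      traceNorm (ρ m) ≤ 1 ∧ traceNorm (ρt m) ≤ 1 ∧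
      traceNorm (ρt m - ρ m) ≤ 2 * ∑ k ∈ Finset.range m, ‖Ut k - U k‖ by
    exact (key N le_rfl).2.2.2.2
  intro m
  induction m with
  | zero =>
    intro _
    rw [hρ0, hρt0]
    have htr' : traceNorm ρin = 1 := by
      rw [traceNorm_psd hin, htr]; rfl
    refine ⟨hin, hin, le_of_eq htr', le_of_eq htr', ?_⟩
    simp only [sub_self, Finset.range_zero, Finset.sum_empty, mul_zero]
    have h0 : traceNorm (0 : Matrix n n ℂ) = 0 := by
      have hpsd : (0 : Matrix n n ℂ).PosSemidef := Matrix.PosSemidef.zero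
      rw [traceNorm_psd hpsd, Matrix.trace_zero]
      rfl
    rw [h0]
  | succ m ih =>
    intro hmN
    have hm : m < N := hmN
    obtain ⟨hρm, hρtm, hρtr, hρttr, hΔ⟩ := ih (Nat.le_of_succ_le hmN)
    set M : Matrix n n ℂ := P m * U m with hM
    set Mt : Matrix n n ℂ := P m * Ut m with hMt
    have hMn : ‖M‖ ≤ 1 := by
      calc ‖M‖ ≤ ‖P m‖ * ‖U m‖ := Matrix.l2_opNorm_mul _ _
        _ ≤ 1 := by
            rw [norm_unitary (hU m hm)]
            simpa using norm_le_one_of_contraction (hP m hm)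
    have hMtn : ‖Mt‖ ≤ 1 := by
      calc ‖Mt‖ ≤ ‖P m‖ * ‖Ut m‖ := Matrix.l2_opNorm_mul _ _
        _ ≤ 1 := by
            rw [norm_unitary (hUt m hm)]
            simpa using norm_le_one_of_contraction (hP m hm)
    have hρs : ρ (m + 1) = M * ρ m * Mᴴ := by
      rw [hρ m hm, hM]
      simp only [Matrix.conjTranspose_mul, Matrix.mul_assoc]
    have hρts : ρt (m + 1) = Mt * ρt m * Mtᴴ := by
      rw [hρt m hm, hMt]
      simp only [Matrix.conjTranspose_mul, Matrix.mul_assoc]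
    have hρm1 : (ρ (m + 1)).PosSemidef := by
      rw [hρs]; exact hρm.mul_mul_conjTranspose_same M
    have hρtm1 : (ρt (m + 1)).PosSemidef := by
      rw [hρts]; exact hρtm.mul_mul_conjTranspose_same Mt
    have hMM : ‖M‖ * ‖M‖ ≤ 1 := by nlinarith [norm_nonneg M]
    have hMtMt : ‖Mt‖ * ‖Mt‖ ≤ 1 := by nlinarith [norm_nonneg Mt]
    have hρtr1 : traceNorm (ρ (m + 1)) ≤ 1 := by
      rw [hρs]
      have h2 := traceNorm_conj_le hρm.isHermitian M
      have h0 := traceNorm_nonneg_of_hermitian hρm.isHermitian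
      nlinarith [hMM, h0, h2, hρtr]
    have hρttr1 : traceNorm (ρt (m + 1)) ≤ 1 := by
      rw [hρts]
      have h2 := traceNorm_conj_le hρtm.isHermitian Mt
      have h0 := traceNorm_nonneg_of_hermitian hρtm.isHermitian
      nlinarith [hMtMt, h0, h2, hρttr]
    refine ⟨hρm1, hρtm1, hρtr1, hρttr1, ?_⟩
    set E : Matrix n n ℂ := Ut m - U m with hE
    have hPE : Mt - M = P m * E := by
      rw [hMt, hM, hE, Matrix.mul_sub]
    set Δ : Matrix n n ℂ := ρt m - ρ m with hΔdef
    set S : Matrix n n ℂ := Mt * ρ m * Mtᴴ - M * ρ m * Mᴴ with hS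
    have hsplit : ρt (m + 1) - ρ (m + 1) = Mt * Δ * Mtᴴ + S := by
      rw [hρs, hρts, hΔdef, hS]
      simp only [Matrix.mul_sub, Matrix.sub_mul]
      abel
    have hΔH : Δ.IsHermitian := hρtm.isHermitian.sub hρm.isHermitian
    have hSH : S.IsHermitian :=
      (hρm.mul_mul_conjTranspose_same Mt).isHermitian.sub
        (hρm.mul_mul_conjTranspose_same M).isHermitian
    have hMtΔH : (Mt * Δ * Mtᴴ).IsHermitian := Matrix.isHermitian_mul_mul_conjTranspose Mt hΔH
    -- first term
    have h1 : traceNorm (Mt * Δ * Mtᴴ) ≤ traceNorm Δ := by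
      have h2 := traceNorm_conj_le hΔH Mt
      have h0 := traceNorm_nonneg_of_hermitian hΔH
      nlinarith [hMtMt, h0, h2]
    -- second term: S = Mt ρ (Mt − M)ᴴ + (Mt − M) ρ Mᴴ
    have hSsplit : S = Mt * ρ m * (P m * E)ᴴ + (P m * E) * ρ m * Mᴴ := by
      rw [hS, ← hPE]
      simp only [Matrix.conjTranspose_sub, Matrix.mul_sub, Matrix.sub_mul]
      abel
    have hPEn : ‖P m * E‖ ≤ ‖E‖ := by
      have := Matrix.l2_opNorm_mul (P m) E
      have hP1 : ‖P m‖ ≤ 1 := norm_le_one_of_contraction (hP m hm)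
      nlinarith [norm_nonneg E, norm_nonneg (P m)]
    have hS2 : traceNorm S ≤ 2 * ‖E‖ := by
      obtain ⟨W, hW1, hW2⟩ := exists_optimizer hSH
      rw [← hW2, hSsplit, Matrix.mul_add, Matrix.trace_add, Complex.add_re]
      have hterm : ∀ (A B : Matrix n n ℂ),
          ((W * (A * ρ m * B)).trace).re ≤ ‖B * (W * A)‖ * traceNorm (ρ m) := by
        intro A B
        have hcyc : (W * (A * ρ m * B)).trace = ((B * (W * A)) * ρ m).trace := by
          rw [show W * (A * ρ m * B) = (W * A) * ρ m * B by simp only [Matrix.mul_assoc]]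
          rw [Matrix.trace_mul_cycle]
        rw [hcyc]
        exact re_trace_mul_le hρm.isHermitian _
      have hbound : ∀ (A B : Matrix n n ℂ), ‖A‖ ≤ 1 → ‖B‖ ≤ ‖E‖ →
          ‖B * (W * A)‖ ≤ ‖E‖ := by
        intro A B hA hB
        have h2 := Matrix.l2_opNorm_mul W A
        have h3 : ‖W‖ * ‖A‖ ≤ 1 := by nlinarith [norm_nonneg W, norm_nonneg A]
        have h4 : ‖W * A‖ ≤ 1 := le_trans h2 h3
        calc ‖B * (W * A)‖ ≤ ‖B‖ * ‖W * A‖ := Matrix.l2_opNorm_mul _ _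
          _ ≤ ‖E‖ * 1 := mul_le_mul hB h4 (norm_nonneg _) ((norm_nonneg B).trans hB)
          _ = ‖E‖ := mul_one _
      have hρ0 := traceNorm_nonneg_of_hermitian hρm.isHermitian
      have t1 := hterm Mt ((P m * E)ᴴ)
      have t2 := hterm (P m * E) Mᴴ
      have b1 : ‖(P m * E)ᴴ * (W * Mt)‖ ≤ ‖E‖ := by
        refine hbound Mt ((P m * E)ᴴ) hMtn ?_
        rw [Matrix.l2_opNorm_conjTranspose]; exact hPEn
      have b2 : ‖Mᴴ * (W * (P m * E))‖ ≤ ‖E‖ := by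
        calc ‖Mᴴ * (W * (P m * E))‖ ≤ ‖Mᴴ‖ * ‖W * (P m * E)‖ := Matrix.l2_opNorm_mul _ _
          _ ≤ ‖E‖ := by
              have h2 := Matrix.l2_opNorm_mul W (P m * E)
              have h3 : ‖Mᴴ‖ ≤ 1 := by rw [Matrix.l2_opNorm_conjTranspose]; exact hMn
              nlinarith [norm_nonneg Mᴴ, norm_nonneg (W * (P m * E)), norm_nonneg W,
                norm_nonneg (P m * E), norm_nonneg E]
      nlinarith [norm_nonneg E]
    calc traceNorm (ρt (m + 1) - ρ (m + 1))
        = traceNorm (Mt * Δ * Mtᴴ + S) := by rw [hsplit]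
      _ ≤ traceNorm (Mt * Δ * Mtᴴ) + traceNorm S := traceNorm_add_le hMtΔH hSH
      _ ≤ traceNorm Δ + 2 * ‖E‖ := add_le_add h1 hS2
      _ ≤ 2 * ∑ k ∈ Finset.range m, ‖Ut k - U k‖ + 2 * ‖E‖ := by linarith
      _ = 2 * ∑ k ∈ Finset.range (m + 1), ‖Ut k - U k‖ := by
          rw [Finset.sum_range_succ, hE]; ring
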